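/- (v-adic ABP criterion, ℓ = 1 case) Let Φ(t) ∈ k̄[t], and let ψ(t) be a v-adically entire power series with algebraic coefficients generating a finite extension of k_v, satisfying ψ^{(-1)} = Φψ. Let γ ∈ k̄^× \ F̄_q^× with Φ(γ^{q^{-i}}) ≠ 0 for all i ≥ 1. If ψ(γ) = 0, then ψ vanishes identically. -/

import Mathlib

/- STATEMENT 11 (v-adic ABP criterion, ℓ = 1 case): Φ(t) ∈ k̄[t], ψ = ∑ a_i t^i a
v-adically entire power series with algebraic coefficients generating a finite
extension of k_v, satisfying ψ^{(-1)} = Φψ.  If γ ∈ k̄^× \ F̄_q^× satisfies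
Φ(γ^{q^{-i}}) ≠ 0 for all i ≥ 1 and ψ(γ) = 0, then ψ ≡ 0.  Twists ψ^{(-1)} and the
root tower γ^{q^{-i}} are encoded via unique q-th roots: a' with (a' n)^q = a n, and
g with g 0 = γ, g(i+1)^q = g i. -/

open Filter
set_option maxHeartbeats 1000000
set_option synthInstance.maxHeartbeats 1000000

open Filter IsUltrametricDist

namespace ABPaux

variable {K : Type*} [NontriviallyNormedField K] [CompleteSpace K] [IsUltrametricDist K]

/-- entire condition -/
def Ent (a : ℕ → K) : Prop :=
  ∀ c : ℝ, 0 < c → Tendsto (fun i => ‖a i‖ * c ^ i) atTop (nhds 0)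

lemma ent_of {a : ℕ → K}
    (hent : Tendsto (fun i => ‖a i‖ ^ ((1 : ℝ) / (i : ℝ))) atTop (nhds 0)) : Ent a := by
  intro c hc
  apply squeeze_zero' (Eventually.of_forall fun i => by positivity)
    (g := fun i => (1 / 2 : ℝ) ^ i)
  · have h1 : (0 : ℝ) < 1 / (2 * c) := by positivity
    have h2 : ∀ᶠ i in atTop, ‖a i‖ ^ ((1 : ℝ) / (i : ℝ)) < 1 / (2 * c) :=
      hent.eventually (gt_mem_nhds h1)
    filter_upwards [h2, eventually_ge_atTop 1] with i hi hi1
    have hi0 : (i : ℝ) ≠ 0 := Nat.cast_ne_zero.mpr (by omega)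
    have hnorm : ‖a i‖ ≤ (1 / (2 * c)) ^ i := by
      have := pow_le_pow_left₀ (Real.rpow_nonneg (norm_nonneg _) _) hi.le i
      rwa [← Real.rpow_natCast (‖a i‖ ^ ((1 : ℝ) / (i : ℝ))) i, ← Real.rpow_mul (norm_nonneg _),
        one_div, inv_mul_cancel₀ hi0, Real.rpow_one] at this
    calc ‖a i‖ * c ^ i ≤ (1 / (2 * c)) ^ i * c ^ i := by
          gcongr
      _ = (1 / 2 : ℝ) ^ i := by
          rw [← mul_pow]; congr 1; field_simp
  · exact tendsto_pow_atTop_nhds_zero_of_lt_one (by norm_num) (by norm_num)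

lemma ent_tendsto {a : ℕ → K} (ha : Ent a) (x : K) :
    Tendsto (fun i => a i * x ^ i) atTop (nhds 0) := by
  rw [tendsto_zero_iff_norm_tendsto_zero]
  apply squeeze_zero (fun i => norm_nonneg _) (g := fun i => ‖a i‖ * (‖x‖ + 1) ^ i)
  · intro i
    rw [norm_mul, norm_pow]
    gcongr
    linarith [norm_nonneg x]
  · exact ha _ (by positivity)

lemma ent_summable {a : ℕ → K} (ha : Ent a) (x : K) : Summable fun i => a i * x ^ i := by
  apply NonarchimedeanAddGroup.summable_of_tendsto_cofinite_zero
  rw [Nat.cofinite_eq_atTop]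
  exact ent_tendsto ha x

lemma ent_abs_summable {a : ℕ → K} (ha : Ent a) (x : K) :
    Summable fun i => ‖a i * x ^ i‖ := by
  obtain ⟨C, hC⟩ := (ha (2 * ‖x‖ + 2) (by positivity)).bddAbove_range
  refine Summable.of_nonneg_of_le (fun i => norm_nonneg _) ?_
    (((summable_geometric_of_lt_one (r := (1/2 : ℝ)) (by norm_num) (by norm_num))).mul_left C)
  intro i
  have h1 : ‖a i‖ * (2 * ‖x‖ + 2) ^ i ≤ C := hC (Set.mem_range_self i)
  have h2 : ‖a i * x ^ i‖ = ‖a i‖ * ‖x‖ ^ i := by rw [norm_mul, norm_pow]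
  rw [h2]
  calc ‖a i‖ * ‖x‖ ^ i ≤ ‖a i‖ * ((2 * ‖x‖ + 2) * (1 / 2)) ^ i := by
        gcongr; linarith [norm_nonneg x]
    _ = (‖a i‖ * (2 * ‖x‖ + 2) ^ i) * (1 / 2) ^ i := by rw [mul_pow]; ring
    _ ≤ C * (1 / 2) ^ i := by gcongr

/-- the quotient coefficients upon division by `x - z` -/
noncomputable def divSeq (a : ℕ → K) (z : K) : ℕ → K :=
  fun j => ∑' i, a (i + j + 1) * z ^ i

lemma div_summable {a : ℕ → K} (ha : Ent a) (z : K) (j : ℕ) :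
    Summable fun i => a (i + j + 1) * z ^ i := by
  apply NonarchimedeanAddGroup.summable_of_tendsto_cofinite_zero
  rw [Nat.cofinite_eq_atTop, tendsto_zero_iff_norm_tendsto_zero]
  apply squeeze_zero (fun i => norm_nonneg _)
    (g := fun i => ‖a (i + j + 1)‖ * (‖z‖ + 1) ^ (i + j + 1))
  · intro i
    rw [norm_mul, norm_pow]
    have h1 : ‖z‖ ^ i ≤ (‖z‖ + 1) ^ (i + j + 1) := by
      calc ‖z‖ ^ i ≤ (‖z‖ + 1) ^ i := by gcongr; linarith [norm_nonneg z]
        _ ≤ (‖z‖ + 1) ^ (i + j + 1) := by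
            apply pow_le_pow_right₀ (by linarith [norm_nonneg z]) (by omega)
    gcongr
  · have h := (ha (‖z‖ + 1) (by positivity)).comp (tendsto_add_atTop_nat (j + 1))
    exact h

lemma div_ent {a : ℕ → K} (ha : Ent a) (z : K) : Ent (divSeq a z) := by
  intro c hc
  rw [Metric.tendsto_atTop]
  intro ε hε
  set s : ℝ := c + ‖z‖ + 1 with hs
  have hzs : ‖z‖ ≤ s := by simp only [hs]; linarith
  have hcs : c ≤ s := by simp only [hs]; linarith [norm_nonneg z]
  have hs1 : (1 : ℝ) ≤ s := by have := norm_nonneg z; simp only [hs]; linarith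
  have hs0 : (0 : ℝ) < s := by linarith
  obtain ⟨N, hN⟩ := (Metric.tendsto_atTop.mp (ha s hs0)) (ε / 2) (by linarith)
  refine ⟨N, fun j hj => ?_⟩
  have hcj : (0 : ℝ) < c ^ j := pow_pos hc j
  have hb : ∀ i, ‖a (i + j + 1) * z ^ i‖ ≤ (ε / 2) / c ^ j := by
    intro i
    rw [norm_mul, norm_pow, le_div_iff₀ hcj]
    have hmge : N ≤ i + j + 1 := by omega
    have hm := hN (i + j + 1) hmge
    rw [Real.dist_eq, sub_zero, abs_of_nonneg (by positivity)] at hm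
    calc ‖a (i + j + 1)‖ * ‖z‖ ^ i * c ^ j ≤ ‖a (i + j + 1)‖ * s ^ i * s ^ j := by gcongr
      _ = ‖a (i + j + 1)‖ * s ^ (i + j) := by rw [mul_assoc, ← pow_add]
      _ ≤ ‖a (i + j + 1)‖ * s ^ (i + j + 1) :=
          mul_le_mul_of_nonneg_left (pow_le_pow_right₀ hs1 (Nat.le_succ _)) (norm_nonneg _)
      _ ≤ ε / 2 := hm.le
  have h2 : ‖divSeq a z j‖ ≤ (ε / 2) / c ^ j :=
    norm_tsum_le_of_forall_le_of_nonneg (by positivity) hb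
  rw [Real.dist_eq, sub_zero, abs_of_nonneg (by positivity)]
  have h3 : ‖divSeq a z j‖ * c ^ j ≤ ε / 2 := by
    calc ‖divSeq a z j‖ * c ^ j ≤ ((ε / 2) / c ^ j) * c ^ j :=
          mul_le_mul_of_nonneg_right h2 hcj.le
      _ = ε / 2 := div_mul_cancel₀ _ (ne_of_gt hcj)
  linarith

lemma div_rec {a : ℕ → K} (ha : Ent a) (z : K) (j : ℕ) :
    divSeq a z j = a (j + 1) + z * divSeq a z (j + 1) := by
  have h1 : divSeq a z j = a (j + 1) + ∑' i, a (i + 1 + j + 1) * z ^ (i + 1) := by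
    rw [divSeq, Summable.tsum_eq_zero_add (div_summable ha z j)]
    simp
  rw [h1, divSeq, ← tsum_mul_left]
  congr 1
  apply tsum_congr
  intro i
  have he : i + 1 + j + 1 = i + (j + 1) + 1 := by omega
  rw [he, pow_succ]
  ring

lemma div_zero {a : ℕ → K} (ha : Ent a) (z : K) (hz : ∑' i, a i * z ^ i = 0) :
    z * divSeq a z 0 = -a 0 := by
  have h1 : (0 : K) = a 0 + ∑' i, a (i + 1) * z ^ (i + 1) := by
    rw [← hz, Summable.tsum_eq_zero_add (ent_summable ha z)]
    simp
  have h2 : z * divSeq a z 0 = ∑' i, a (i + 1) * z ^ (i + 1) := by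
    rw [divSeq, ← tsum_mul_left]
    apply tsum_congr
    intro i
    simp only [Nat.add_zero]
    rw [pow_succ]
    ring
  rw [h2]
  linear_combination -h1

lemma div_eval {a : ℕ → K} (ha : Ent a) (z : K) (hz : ∑' i, a i * z ^ i = 0) (x : K) :
    ∑' i, a i * x ^ i = (x - z) * ∑' i, divSeq a z i * x ^ i := by
  set b := divSeq a z with hbdef
  have hb : Ent b := div_ent ha z
  have hrec : ∀ n, a (n + 1) = b n - z * b (n + 1) := by
    intro n
    have := div_rec ha z n
    rw [← hbdef] at this
    linear_combination -this
  have h0 : z * b 0 = -a 0 := div_zero ha z hz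
  have hsb : Summable fun i => b i * x ^ i := ent_summable hb x
  have hs1 : Summable fun i => (b i * x ^ i) * x := hsb.mul_right x
  have hs2 : Summable fun i => b (i + 1) * x ^ (i + 1) :=
    (summable_nat_add_iff 1).mpr hsb
  have hs3 : Summable fun i => z * (b (i + 1) * x ^ (i + 1)) := hs2.mul_left z
  have key : ∑' i, a i * x ^ i
      = a 0 + ∑' i, ((b i * x ^ i) * x - z * (b (i + 1) * x ^ (i + 1))) := by
    rw [Summable.tsum_eq_zero_add (ent_summable ha x)]
    simp only [pow_zero, mul_one]
    congr 1
    apply tsum_congr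
    intro i
    rw [hrec i, pow_succ]
    ring
  rw [key, Summable.tsum_sub hs1 hs3, tsum_mul_right, tsum_mul_left]
  have h4 : ∑' i, b (i + 1) * x ^ (i + 1) = (∑' i, b i * x ^ i) - b 0 := by
    rw [Summable.tsum_eq_zero_add hsb]
    simp
  rw [h4]
  linear_combination h0

/-- Gauss norm -/
noncomputable def Nrm (a : ℕ → K) (s : ℝ) : ℝ := ⨆ i, ‖a i‖ * s ^ i

lemma nrm_nonneg (a : ℕ → K) {s : ℝ} (hs : 0 ≤ s) : 0 ≤ Nrm a s :=
  Real.iSup_nonneg fun i => mul_nonneg (norm_nonneg _) (pow_nonneg hs i)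

lemma le_nrm {a : ℕ → K} (ha : Ent a) {s : ℝ} (hs : 0 < s) (n : ℕ) :
    ‖a n‖ * s ^ n ≤ Nrm a s :=
  le_ciSup (ha s hs).bddAbove_range n

lemma nrm_le {a : ℕ → K} {s C : ℝ} (h : ∀ n, ‖a n‖ * s ^ n ≤ C) : Nrm a s ≤ C :=
  ciSup_le h

lemma nrm_mono {a : ℕ → K} (ha : Ent a) {r R : ℝ} (hr : 0 ≤ r) (hR : 0 < R) (h : r ≤ R) :
    Nrm a r ≤ Nrm a R :=
  nrm_le fun n => le_trans (by gcongr) (le_nrm ha hR n)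

lemma exists_max {u : ℕ → ℝ} (h0 : ∀ i, 0 ≤ u i) (hu : Tendsto u atTop (nhds 0))
    (hpos : 0 < ⨆ i, u i) :
    ∃ j, u j = (⨆ i, u i) ∧ ∀ i, j < i → u i < ⨆ i, u i := by
  set L := ⨆ i, u i with hL
  have hbdd := hu.bddAbove_range
  have hle : ∀ i, u i ≤ L := fun i => le_ciSup hbdd i
  have hev : ∀ᶠ i in atTop, u i < L / 2 := hu.eventually (gt_mem_nhds (by linarith))
  obtain ⟨N, hN⟩ := eventually_atTop.mp hev
  have hne : (Finset.range (N + 1)).Nonempty := ⟨0, by simp⟩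
  obtain ⟨j0, hj0mem, hj0⟩ := Finset.exists_mem_eq_sup' hne u
  have hLM : L ≤ max ((Finset.range (N + 1)).sup' hne u) (L / 2) := by
    apply ciSup_le
    intro i
    rcases lt_or_ge i (N + 1) with h | h
    · exact le_max_of_le_left (Finset.le_sup' u (Finset.mem_range.mpr h))
    · exact le_max_of_le_right (hN i (by omega)).le
  have hML : (Finset.range (N + 1)).sup' hne u = L := by
    refine le_antisymm (hj0 ▸ hle j0) ?_
    rcases max_cases ((Finset.range (N + 1)).sup' hne u) (L / 2) with ⟨heq, _⟩ | ⟨heq, _⟩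
    · rw [heq] at hLM; exact hLM
    · rw [heq] at hLM; linarith
  have hattain : ∀ i, u i = L → i < N + 1 := by
    intro i hi
    by_contra hcon
    have := hN i (by omega)
    rw [hi] at this
    linarith
  set A := (Finset.range (N + 1)).filter (fun j => u j = L) with hA
  have hAne : A.Nonempty := by
    refine ⟨j0, Finset.mem_filter.mpr ⟨hj0mem, ?_⟩⟩
    rw [← hj0, hML]
  refine ⟨A.max' hAne, ?_, ?_⟩
  · exact (Finset.mem_filter.mp (A.max'_mem hAne)).2
  · intro i hi
    rcases lt_or_eq_of_le (hle i) with h | h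
    · exact h
    · exfalso
      have : i ∈ A := Finset.mem_filter.mpr ⟨Finset.mem_range.mpr (hattain i h), h⟩
      exact absurd (Finset.le_max' A i this) (by omega)

lemma norm_sub_eq_left {x y : K} (h : ‖y‖ < ‖x‖) : ‖x - y‖ = ‖x‖ := by
  refine le_antisymm ?_ ?_
  · calc ‖x - y‖ ≤ max ‖x‖ ‖-y‖ := by
          rw [sub_eq_add_neg]; exact norm_add_le_max x (-y)
      _ = ‖x‖ := by rw [norm_neg]; exact max_eq_left h.le
  · by_contra hcon
    push_neg at hcon
    have h1 : ‖x‖ ≤ max ‖x - y‖ ‖y‖ := by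
      calc ‖x‖ = ‖(x - y) + y‖ := by ring_nf
        _ ≤ max ‖x - y‖ ‖y‖ := norm_add_le_max _ _
    rcases max_cases ‖x - y‖ ‖y‖ with ⟨heq, _⟩ | ⟨heq, _⟩ <;> rw [heq] at h1 <;> linarith

/-- upper bound: dividing by (x - z) divides the Gauss norm by at least s -/
lemma nrm_up {a b : ℕ → K} (hb : Ent b) {z : K} {s : ℝ} (hz : ‖z‖ ≤ s) (hs : 0 < s)
    (h0 : a 0 = -(z * b 0)) (hrec : ∀ n, a (n + 1) = b n - z * b (n + 1)) :
    Nrm a s ≤ s * Nrm b s := by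
  apply nrm_le
  intro n
  match n with
  | 0 =>
    rw [h0, pow_zero, mul_one, norm_neg, norm_mul]
    calc ‖z‖ * ‖b 0‖ ≤ s * (‖b 0‖ * s ^ 0) := by
          rw [pow_zero, mul_one]; exact mul_le_mul_of_nonneg_right hz (norm_nonneg _)
      _ ≤ s * Nrm b s := by
          exact mul_le_mul_of_nonneg_left (le_nrm hb hs 0) hs.le
  | n + 1 =>
    rw [hrec n]
    have hmax : ‖b n - z * b (n + 1)‖ ≤ max ‖b n‖ ‖z * b (n + 1)‖ := by
      rw [sub_eq_add_neg]
      calc ‖b n + -(z * b (n + 1))‖ ≤ max ‖b n‖ ‖-(z * b (n + 1))‖ := norm_add_le_max _ _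
        _ = max ‖b n‖ ‖z * b (n + 1)‖ := by rw [norm_neg]
    have h1 : ‖b n‖ * s ^ (n + 1) ≤ s * Nrm b s := by
      calc ‖b n‖ * s ^ (n + 1) = s * (‖b n‖ * s ^ n) := by rw [pow_succ]; ring
        _ ≤ s * Nrm b s := mul_le_mul_of_nonneg_left (le_nrm hb hs n) hs.le
    have h2 : ‖z * b (n + 1)‖ * s ^ (n + 1) ≤ s * Nrm b s := by
      rw [norm_mul]
      calc ‖z‖ * ‖b (n + 1)‖ * s ^ (n + 1) ≤ s * (‖b (n + 1)‖ * s ^ (n + 1)) := by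
            rw [mul_assoc]
            exact mul_le_mul_of_nonneg_right hz (by positivity)
        _ ≤ s * Nrm b s := mul_le_mul_of_nonneg_left (le_nrm hb hs (n + 1)) hs.le
    calc ‖b n - z * b (n + 1)‖ * s ^ (n + 1)
        ≤ max ‖b n‖ ‖z * b (n + 1)‖ * s ^ (n + 1) :=
          mul_le_mul_of_nonneg_right hmax (by positivity)
      _ = max (‖b n‖ * s ^ (n + 1)) (‖z * b (n + 1)‖ * s ^ (n + 1)) :=
          max_mul_of_nonneg _ _ (by positivity)
      _ ≤ s * Nrm b s := max_le h1 h2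

/-- lower bound at radius R -/
lemma nrm_low {a b : ℕ → K} (ha : Ent a) (hb : Ent b) {z : K} {R : ℝ} (hz : ‖z‖ ≤ R)
    (hR : 0 < R) (hrec : ∀ n, a (n + 1) = b n - z * b (n + 1)) :
    R * Nrm b R ≤ Nrm a R := by
  rcases eq_or_lt_of_le (nrm_nonneg b hR.le) with h | h
  · rw [← h, mul_zero]; exact nrm_nonneg a hR.le
  obtain ⟨j, hj, hjmax⟩ := exists_max (u := fun i => ‖b i‖ * R ^ i)
    (fun i => by positivity) (hb R hR) h
  have hRj : (0 : ℝ) < R ^ j := pow_pos hR j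
  have hlt : ‖z * b (j + 1)‖ < ‖b j‖ := by
    have h1 : ‖b (j + 1)‖ * R ^ (j + 1) < ‖b j‖ * R ^ j := by
      have := hjmax (j + 1) (Nat.lt_succ_self j)
      rw [← hj] at this
      exact this
    have h2 : (R * ‖b (j + 1)‖) * R ^ j < ‖b j‖ * R ^ j := by
      calc (R * ‖b (j + 1)‖) * R ^ j = ‖b (j + 1)‖ * R ^ (j + 1) := by rw [pow_succ]; ring
        _ < ‖b j‖ * R ^ j := h1
    have h3 : R * ‖b (j + 1)‖ < ‖b j‖ := lt_of_mul_lt_mul_right h2 hRj.le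
    calc ‖z * b (j + 1)‖ = ‖z‖ * ‖b (j + 1)‖ := norm_mul _ _
      _ ≤ R * ‖b (j + 1)‖ := mul_le_mul_of_nonneg_right hz (norm_nonneg _)
      _ < ‖b j‖ := h3
  have heq : ‖a (j + 1)‖ = ‖b j‖ := by rw [hrec j]; exact norm_sub_eq_left hlt
  calc R * Nrm b R = R * (‖b j‖ * R ^ j) := by
        rw [show Nrm b R = ‖b j‖ * R ^ j from hj.symm]
    _ = ‖a (j + 1)‖ * R ^ (j + 1) := by rw [heq, pow_succ]; ring
    _ ≤ Nrm a R := le_nrm ha hR (j + 1)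

noncomputable def seqA (a : ℕ → K) (g : ℕ → K) : ℕ → ℕ → K
  | 0 => a
  | (m + 1) => divSeq (seqA a g m) (g m)

lemma seqA_inv {a g : ℕ → K} (ha : Ent a)
    (hzero : ∀ μ, ∑' i, a i * g μ ^ i = 0)
    (hginj : ∀ μ ν, μ < ν → g μ ≠ g ν) (m : ℕ) :
    Ent (seqA a g m) ∧
      (∑' i, seqA a g m i * g m ^ i = 0) ∧
      ∀ x, ∑' i, a i * x ^ i
        = (∏ μ ∈ Finset.range m, (x - g μ)) * ∑' i, seqA a g m i * x ^ i := by
  have key : ∀ m : ℕ, Ent (seqA a g m) ∧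
      ∀ x, ∑' i, a i * x ^ i
        = (∏ μ ∈ Finset.range m, (x - g μ)) * ∑' i, seqA a g m i * x ^ i := by
    intro m
    induction m with
    | zero => exact ⟨ha, fun x => by simp [seqA]⟩
    | succ m ih =>
      obtain ⟨hEm, hMul⟩ := ih
      have hprod : (∏ μ ∈ Finset.range m, (g m - g μ)) ≠ 0 := by
        apply Finset.prod_ne_zero_iff.mpr
        intro μ hμ
        exact sub_ne_zero_of_ne fun hc => hginj μ m (Finset.mem_range.mp hμ) hc.symm
      have hzm : ∑' i, seqA a g m i * g m ^ i = 0 := by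
        have h1 := hMul (g m)
        rw [hzero m] at h1
        exact (mul_eq_zero.mp h1.symm).resolve_left hprod
      refine ⟨div_ent hEm (g m), fun x => ?_⟩
      rw [hMul x, Finset.prod_range_succ,
        show seqA a g (m + 1) = divSeq (seqA a g m) (g m) from rfl,
        div_eval hEm (g m) hzm x]
      ring
  obtain ⟨hEm, hMul⟩ := key m
  refine ⟨hEm, ?_, hMul⟩
  have hprod : (∏ μ ∈ Finset.range m, (g m - g μ)) ≠ 0 := by
    apply Finset.prod_ne_zero_iff.mpr
    intro μ hμ
    exact sub_ne_zero_of_ne fun hc => hginj μ m (Finset.mem_range.mp hμ) hc.symm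
  have h1 := hMul (g m)
  rw [hzero m] at h1
  exact (mul_eq_zero.mp h1.symm).resolve_left hprod

lemma descent {a g : ℕ → K} (ha : Ent a)
    (hzero : ∀ μ, ∑' i, a i * g μ ^ i = 0)
    (hginj : ∀ μ ν, μ < ν → g μ ≠ g ν)
    {r : ℝ} (hr : 0 < r) (hgr : ∀ μ, ‖g μ‖ ≤ r) (n : ℕ) :
    a n = 0 := by
  set R := 2 * r with hRdef
  have hR0 : 0 < R := by positivity
  have hrR : r ≤ R := by simp only [hRdef]; linarith
  have hinv := seqA_inv ha hzero hginj
  have hbnd : ∀ m, Nrm a r ≤ r ^ m * Nrm (seqA a g m) r ∧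
      R ^ m * Nrm (seqA a g m) R ≤ Nrm a R := by
    intro m
    induction m with
    | zero => constructor <;> simp [seqA]
    | succ m ih =>
      obtain ⟨h1, h2⟩ := ih
      obtain ⟨hEm, hzm, hMul⟩ := hinv m
      have hEm1 : Ent (seqA a g (m + 1)) := (hinv (m + 1)).1
      have hrec : ∀ k, seqA a g m (k + 1)
          = seqA a g (m + 1) k - g m * seqA a g (m + 1) (k + 1) := by
        intro k
        have h3 := div_rec hEm (g m) k
        rw [show seqA a g (m + 1) = divSeq (seqA a g m) (g m) from rfl]
        linear_combination -h3
      have h0' : seqA a g m 0 = -(g m * seqA a g (m + 1) 0) := by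
        have h3 := div_zero hEm (g m) hzm
        rw [show seqA a g (m + 1) = divSeq (seqA a g m) (g m) from rfl]
        linear_combination h3
      constructor
      · calc Nrm a r ≤ r ^ m * Nrm (seqA a g m) r := h1
          _ ≤ r ^ m * (r * Nrm (seqA a g (m + 1)) r) :=
              mul_le_mul_of_nonneg_left (nrm_up hEm1 (hgr m) hr h0' hrec)
                (pow_nonneg hr.le m)
          _ = r ^ (m + 1) * Nrm (seqA a g (m + 1)) r := by rw [pow_succ]; ring
      · calc R ^ (m + 1) * Nrm (seqA a g (m + 1)) R
            = R ^ m * (R * Nrm (seqA a g (m + 1)) R) := by rw [pow_succ]; ring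
          _ ≤ R ^ m * Nrm (seqA a g m) R :=
              mul_le_mul_of_nonneg_left
                (nrm_low hEm hEm1 (le_trans (hgr m) hrR) hR0 hrec)
                (pow_nonneg hR0.le m)
          _ ≤ Nrm a R := h2
  have hkey : ∀ m : ℕ, Nrm a r ≤ (1 / 2 : ℝ) ^ m * Nrm a R := by
    intro m
    obtain ⟨h1, h2⟩ := hbnd m
    have hEm : Ent (seqA a g m) := (hinv m).1
    have h3 : Nrm (seqA a g m) r ≤ Nrm (seqA a g m) R := nrm_mono hEm hr.le hR0 hrR
    have h4 : Nrm (seqA a g m) R ≤ Nrm a R / R ^ m := by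
      rw [le_div_iff₀ (pow_pos hR0 m)]
      linarith [h2]
    calc Nrm a r ≤ r ^ m * Nrm (seqA a g m) r := h1
      _ ≤ r ^ m * (Nrm a R / R ^ m) :=
          mul_le_mul_of_nonneg_left (le_trans h3 h4) (pow_nonneg hr.le m)
      _ = (r / R) ^ m * Nrm a R := by rw [div_pow]; ring
      _ = (1 / 2 : ℝ) ^ m * Nrm a R := by
          have : r / R = 1 / 2 := by
            rw [hRdef]
            field_simp
          rw [this]
  have hlim : Tendsto (fun m : ℕ => (1 / 2 : ℝ) ^ m * Nrm a R) atTop (nhds 0) := by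
    have := (tendsto_pow_atTop_nhds_zero_of_lt_one (by norm_num : (0:ℝ) ≤ 1/2)
      (by norm_num : (1/2:ℝ) < 1)).mul_const (Nrm a R)
    simpa using this
  have hN0 : Nrm a r ≤ 0 := ge_of_tendsto' hlim hkey
  have h5 : ‖a n‖ * r ^ n ≤ 0 := le_trans (le_nrm ha hr n) hN0
  have h6 : 0 ≤ ‖a n‖ * r ^ n := by positivity
  have h7 : ‖a n‖ = 0 := by
    rcases mul_eq_zero.mp (le_antisymm h5 h6) with h | h
    · exact h
    · exact absurd h (by positivity)
  exact norm_eq_zero.mp h7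

end ABPaux

theorem vAdic_ABP_rank_one
    (Fq : Type*) [Field Fq] [Fintype Fq]
    (K : Type*) [NontriviallyNormedField K] [CompleteSpace K] [IsUltrametricDist K]
    [CharP K (ringChar Fq)]
    [Algebra (RatFunc Fq) K]
    -- k_v inside C_v = K
    (kv : Subfield K)
    -- Φ ∈ k̄[t]
    (Φ : Polynomial K) (hΦalg : ∀ i, IsAlgebraic (RatFunc Fq) (Φ.coeff i))
    -- ψ ∈ E_v: entire, with algebraic coefficients generating a finite extension of k_v
    (a : ℕ → K)
    (hent : Tendsto (fun i => ‖a i‖ ^ ((1 : ℝ) / (i : ℝ))) atTop (nhds 0))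
    (haalg : ∀ i, IsAlgebraic (RatFunc Fq) (a i))
    (hfin : FiniteDimensional kv (IntermediateField.adjoin kv (Set.range a)))
    -- ψ^{(-1)} = Φ ψ, coefficientwise: a_n^{1/q} = ∑_{i+j=n} Φ_i a_j
    (a' : ℕ → K) (ha' : ∀ n, a' n ^ (Fintype.card Fq) = a n)
    (hfe : ∀ n : ℕ, a' n = ∑ i ∈ Finset.range (n + 1), Φ.coeff i * a (n - i))
    -- γ ∈ k̄^× \ F̄_q^×, with its q-power root tower g μ = γ^{q^{-μ}}
    (γ : K) (hγ0 : γ ≠ 0) (hγalg : IsAlgebraic (RatFunc Fq) γ)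
    (hγq : ∀ n : ℕ, 0 < n → γ ^ (Fintype.card Fq) ^ n ≠ γ)
    (g : ℕ → K) (hg0 : g 0 = γ) (hg : ∀ i : ℕ, g (i + 1) ^ (Fintype.card Fq) = g i)
    (hΦγ : ∀ i : ℕ, 1 ≤ i → Φ.eval (g i) ≠ 0)
    (hψγ : ∑' i, a i * γ ^ i = 0) :
    ∀ x : K, ∑' i, a i * x ^ i = 0 := by
  classical
  have ha : ABPaux.Ent a := ABPaux.ent_of hent
  -- characteristic bookkeeping
  haveI : CharP Fq (ringChar Fq) := ringChar.charP Fq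
  obtain ⟨n, hp, hq⟩ := FiniteField.card Fq (ringChar Fq)
  haveI : Fact (ringChar Fq).Prime := ⟨hp⟩
  haveI : ExpChar K (ringChar Fq) := inferInstance
  set q := Fintype.card Fq with hqdef
  have hq0 : q ≠ 0 := Fintype.card_ne_zero
  -- powers of the tower
  have hgpow : ∀ μ : ℕ, g μ ^ q ^ μ = γ := by
    intro μ
    induction μ with
    | zero => simpa using hg0
    | succ μ ih =>
      rw [pow_succ', pow_mul, hg μ, ih]
  have hginj : ∀ μ ν : ℕ, μ < ν → g μ ≠ g ν := by
    intro μ ν h hEq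
    have h1 : g ν ^ q ^ μ = γ := by rw [← hEq]; exact hgpow μ
    have h2 : γ ^ q ^ (ν - μ) = γ := by
      conv_lhs => rw [← h1]
      rw [← pow_mul, ← pow_add, show μ + (ν - μ) = ν from by omega]
      exact hgpow ν
    exact hγq (ν - μ) (by omega) h2
  set r : ℝ := max 1 ‖γ‖ with hrdef
  have hr : (0 : ℝ) < r := lt_of_lt_of_le one_pos (le_max_left _ _)
  have hgr : ∀ μ, ‖g μ‖ ≤ r := by
    intro μ
    by_contra hcon
    push_neg at hcon
    have h1 : ‖γ‖ = ‖g μ‖ ^ q ^ μ := by rw [← hgpow μ, norm_pow]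
    have h2 : ‖g μ‖ ≤ ‖g μ‖ ^ q ^ μ :=
      le_self_pow₀ (le_trans (le_max_left _ _) hcon.le) (pow_ne_zero μ hq0)
    have h3 : ‖γ‖ ≤ r := le_max_right _ _
    rw [h1] at h3
    linarith
  -- functional equation, evaluated
  have hΦsum : ∀ x : K, Summable fun k => ‖Φ.coeff k * x ^ k‖ := by
    intro x
    apply summable_of_ne_finset_zero (s := Finset.range (Φ.natDegree + 1))
    intro k hk
    rw [Polynomial.coeff_eq_zero_of_natDegree_lt (by
      simpa [Nat.lt_succ_iff] using Finset.mem_range.not.mp hk)]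
    simp
  have hΦsum' : ∀ x : K, Summable fun k => Φ.coeff k * x ^ k := by
    intro x
    apply summable_of_ne_finset_zero (s := Finset.range (Φ.natDegree + 1))
    intro k hk
    rw [Polynomial.coeff_eq_zero_of_natDegree_lt (by
      simpa [Nat.lt_succ_iff] using Finset.mem_range.not.mp hk)]
    simp
  have hterm : ∀ (x : K) (m : ℕ), a' m * x ^ m
      = ∑ k ∈ Finset.range (m + 1), (Φ.coeff k * x ^ k) * (a (m - k) * x ^ (m - k)) := by
    intro x m
    rw [hfe m, Finset.sum_mul]
    apply Finset.sum_congr rfl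
    intro k hk
    have hk' : k ≤ m := by
      have := Finset.mem_range.mp hk
      omega
    have hpow : x ^ k * x ^ (m - k) = x ^ m := by
      rw [← pow_add]
      congr 1
      omega
    rw [← hpow]
    ring
  have heval : ∀ x : K, ∑' k, Φ.coeff k * x ^ k = Φ.eval x := by
    intro x
    rw [tsum_eq_sum (s := Finset.range (Φ.natDegree + 1)) (fun k hk => by
      rw [Polynomial.coeff_eq_zero_of_natDegree_lt (by
        simpa [Nat.lt_succ_iff] using Finset.mem_range.not.mp hk)]
      simp)]
    rw [Polynomial.eval_eq_sum_range]
  have hfeval : ∀ x : K, ∑' m, a' m * x ^ m = Φ.eval x * ∑' i, a i * x ^ i := by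
    intro x
    calc ∑' m, a' m * x ^ m
        = ∑' m, ∑ k ∈ Finset.range (m + 1),
            (Φ.coeff k * x ^ k) * (a (m - k) * x ^ (m - k)) := tsum_congr (hterm x)
      _ = (∑' k, Φ.coeff k * x ^ k) * (∑' i, a i * x ^ i) :=
          (tsum_mul_tsum_eq_tsum_sum_range_of_summable_norm (hΦsum x)
            (ABPaux.ent_abs_summable ha x)).symm
      _ = Φ.eval x * ∑' i, a i * x ^ i := by rw [heval x]
  -- summability of the twisted series
  have hsum' : ∀ x : K, Summable fun m => a' m * x ^ m := by
    intro x
    have hbig := summable_sum_mul_range_of_summable_norm' (hΦsum x) (hΦsum' x)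
      (ABPaux.ent_abs_summable ha x) (ABPaux.ent_summable ha x)
    exact hbig.congr fun m => (hterm x m).symm
  -- the q-power map
  have hφcont : Continuous (iterateFrobenius K (ringChar Fq) ↑n) := by
    have hfun : (iterateFrobenius K (ringChar Fq) ↑n : K → K)
        = fun x => x ^ (ringChar Fq) ^ (n : ℕ) :=
      funext fun x => iterateFrobenius_def (ringChar Fq) ↑n x
    rw [hfun]
    exact continuous_pow _
  have hφ : ∀ w : K, iterateFrobenius K (ringChar Fq) ↑n w = w ^ q := by
    intro w
    rw [iterateFrobenius_def, ← hq]
  -- zeros along the tower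
  have hS : ∀ μ : ℕ, ∑' i, a i * g μ ^ i = 0 := by
    intro μ
    induction μ with
    | zero => rw [hg0]; exact hψγ
    | succ μ ih =>
      have hmap := ((hsum' (g (μ + 1))).hasSum.map
        (iterateFrobenius K (ringChar Fq) ↑n) hφcont).tsum_eq
      -- hmap : ∑' m, φ (a' m * g(μ+1)^m) = φ (∑' m, a' m * g(μ+1)^m)
      have hlhs : ∑' m, iterateFrobenius K (ringChar Fq) ↑n (a' m * g (μ + 1) ^ m) = 0 := by
        have hcongr : ∀ m : ℕ, iterateFrobenius K (ringChar Fq) ↑n (a' m * g (μ + 1) ^ m)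
            = a m * g μ ^ m := by
          intro m
          rw [hφ, mul_pow, ha' m, ← pow_mul, mul_comm m q, pow_mul, hg μ]
        rw [tsum_congr hcongr]
        exact ih
      have hpowq : (∑' m, a' m * g (μ + 1) ^ m) ^ q = 0 := by
        rw [← hφ (∑' m, a' m * g (μ + 1) ^ m), ← hmap]
        exact hlhs
      have hT0 : (∑' m, a' m * g (μ + 1) ^ m) = 0 := (pow_eq_zero_iff hq0).mp hpowq
      rw [hfeval (g (μ + 1))] at hT0
      exact (mul_eq_zero.mp hT0).resolve_left (hΦγ (μ + 1) (by omega))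
  -- descent: all coefficients vanish
  have hall : ∀ k, a k = 0 := ABPaux.descent ha hS hginj hr hgr
  intro x
  have hfun : (fun i => a i * x ^ i) = fun _ => (0 : K) :=
    funext fun i => by rw [hall i, zero_mul]
  rw [hfun, tsum_zero]
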